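/- Let p and q be real numbers with p > 0, q > 0 and p ≠ q, let n be a positive integer, let u be a natural number, and let v be a real number such that v + i ≠ 0 for 1 ≤ i ≤ n + u and u + v + i ≠ 0 for 1 ≤ i ≤ n. Then the negative (p,q)-deformed Vandermonde formula holds: 1/Π_{i=1}^{n}[u+v+i]_{p,q} = Σ_{κ=0}^{u} C_{p,q}(−n,κ) · p^{κ(v+n+κ)} · q^{−(n+κ)(u−κ)} · [u]_{κ,p,q} / Π_{i=1}^{n+κ}[v+i]_{p,q}. (The sum may be extended over all κ ∈ ℕ, since [u]_{κ,p,q} = 0 for κ > u.) -/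

import Mathlib

/-- The (p,q)-deformed number `[x]_{p,q} = (p^x - q^x)/(p - q)` (real powers). -/
noncomputable def pqNum (p q x : ℝ) : ℝ := (p ^ x - q ^ x) / (p - q)

/-- The (p,q)-factorial `[n]_{p,q}! = ∏_{i=1}^n [i]_{p,q}`. -/
noncomputable def pqFac (p q : ℝ) (n : ℕ) : ℝ := ∏ i ∈ Finset.range n, pqNum p q ((i : ℝ) + 1)

/-- The κ-th order (p,q)-factorial `[x]_{κ,p,q} = ∏_{v=0}^{κ-1} [x-v]_{p,q}`. -/
noncomputable def pqFacOrd (p q x : ℝ) (j : ℕ) : ℝ := ∏ v ∈ Finset.range j, pqNum p q (x - (v : ℝ))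

/-- The (p,q)-binomial coefficient with real upper argument: `C_{p,q}(x,κ) = [x]_{κ,p,q}/[κ]_{p,q}!`. -/
noncomputable def pqBinomR (p q x : ℝ) (k : ℕ) : ℝ := pqFacOrd p q x k / pqFac p q k

section

variable {p q : ℝ}

lemma pqNum_zero : pqNum p q 0 = 0 := by simp [pqNum]

lemma pqNum_add (hp : 0 < p) (hq : 0 < q) (a b : ℝ) :
    pqNum p q (a + b) = p ^ b * pqNum p q a + q ^ a * pqNum p q b := by
  simp only [pqNum, Real.rpow_add hp, Real.rpow_add hq]
  ring

lemma pqNum_neg (hp : 0 < p) (hq : 0 < q) (x : ℝ) :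
    pqNum p q (-x) = -(p ^ (-x) * q ^ (-x) * pqNum p q x) := by
  have h1 : p ^ x ≠ 0 := (Real.rpow_pos_of_pos hp x).ne'
  have h2 : q ^ x ≠ 0 := (Real.rpow_pos_of_pos hq x).ne'
  simp only [pqNum, Real.rpow_neg hp.le, Real.rpow_neg hq.le]
  field_simp
  ring

lemma pqNum_ne_zero (hp : 0 < p) (hq : 0 < q) (hpq : p ≠ q) {x : ℝ} (hx : x ≠ 0) :
    pqNum p q x ≠ 0 := by
  have hd : p - q ≠ 0 := sub_ne_zero.mpr hpq
  have : p ^ x ≠ q ^ x := by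
    intro h
    apply hpq
    have hl := congrArg Real.log h
    rw [Real.log_rpow hp, Real.log_rpow hq] at hl
    have : Real.log p = Real.log q := mul_left_cancel₀ hx hl
    calc p = Real.exp (Real.log p) := (Real.exp_log hp).symm
    _ = Real.exp (Real.log q) := by rw [this]
    _ = q := Real.exp_log hq
  exact div_ne_zero (sub_ne_zero.mpr this) hd

lemma pqFacOrd_succ (x : ℝ) (k : ℕ) :
    pqFacOrd p q x (k + 1) = pqFacOrd p q x k * pqNum p q (x - k) := by
  simp [pqFacOrd, Finset.prod_range_succ]

lemma pqFacOrd_succ' (x : ℝ) (k : ℕ) :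
    pqFacOrd p q x (k + 1) = pqNum p q x * pqFacOrd p q (x - 1) k := by
  simp only [pqFacOrd, Finset.prod_range_succ']
  rw [mul_comm]
  congr 1
  · simp
  · apply Finset.prod_congr rfl; intro i _; congr 1; push_cast; ring

lemma pqFac_succ (k : ℕ) : pqFac p q (k + 1) = pqFac p q k * pqNum p q ((k : ℝ) + 1) := by
  simp [pqFac, Finset.prod_range_succ]

lemma pqBinomR_succ (x : ℝ) (k : ℕ) :
    pqBinomR p q x (k + 1) = pqBinomR p q x k * pqNum p q (x - k) / pqNum p q ((k : ℝ) + 1) := by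
  rw [pqBinomR, pqBinomR, pqFacOrd_succ, pqFac_succ, ← div_mul_div_comm, mul_div_assoc]

lemma pqBinomR_zero (x : ℝ) : pqBinomR p q x 0 = 1 := by simp [pqBinomR, pqFacOrd, pqFac]

lemma pqFacOrd_self_succ (u : ℕ) :
    pqFacOrd p q (u : ℝ) (u + 1) = 0 := by
  apply Finset.prod_eq_zero (Finset.self_mem_range_succ u)
  simp [pqNum_zero]

end

noncomputable def vTerm (p q : ℝ) (n : ℕ) (w v : ℝ) (κ : ℕ) : ℝ :=
  pqBinomR p q (-(n : ℝ)) κ * p ^ ((κ : ℝ) * (v + (n : ℝ) + (κ : ℝ)))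
    * q ^ (-(((n : ℝ) + (κ : ℝ)) * (w - (κ : ℝ))))
    * pqFacOrd p q w κ
    / ∏ i ∈ Finset.range (n + κ), pqNum p q (v + ((i : ℝ) + 1))

noncomputable def vA (p q : ℝ) (n u : ℕ) (v : ℝ) (κ : ℕ) : ℝ :=
  pqBinomR p q (-(n : ℝ)) κ * p ^ ((κ : ℝ) * (v + 1 + (n : ℝ) + (κ : ℝ)))
    * q ^ (-(((n : ℝ) + (κ : ℝ)) * ((u : ℝ) + 1 - (κ : ℝ))))
    * pqFacOrd p q (u : ℝ) κ
    / ∏ i ∈ Finset.range (n + κ), pqNum p q (v + ((i : ℝ) + 1))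

noncomputable def vB (p q : ℝ) (n u : ℕ) (v : ℝ) (κ : ℕ) : ℝ :=
  -(pqBinomR p q (-(n : ℝ)) κ * p ^ ((κ : ℝ) * (v + 1 + (n : ℝ) + (κ : ℝ)) + (v + 1))
    * q ^ (-(((n : ℝ) + (κ : ℝ)) * ((u : ℝ) + 1 - (κ : ℝ))))
    * pqNum p q ((n : ℝ) + (κ : ℝ)) * pqFacOrd p q (u : ℝ) κ
    / ∏ i ∈ Finset.range (n + κ + 1), pqNum p q (v + ((i : ℝ) + 1)))

section
variable {p q : ℝ}

lemma vA_top (hp : 0 < p) (hq : 0 < q) (n u : ℕ) (v : ℝ) : vA p q n u v (u + 1) = 0 := by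
  simp [vA, pqFacOrd_self_succ]

lemma tzero (n u : ℕ) (v : ℝ) : vTerm p q n ((u : ℝ) + 1) v 0 = vA p q n u v 0 := by
  simp only [vTerm, vA]
  norm_num [pqFacOrd]

lemma split (hp : 0 < p) (hq : 0 < q) (hpq : p ≠ q) (n u : ℕ) (v : ℝ) (κ : ℕ) (hκ : κ ≤ u)
    (hv : ∀ i : ℕ, 1 ≤ i → i ≤ n + u + 1 → v + (i : ℝ) ≠ 0) :
    vTerm p q n (u : ℝ) (v + 1) κ = vA p q n u v κ + vB p q n u v κ := by
  have hN1 : pqNum p q (v + 1) ≠ 0 := by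
    have h := hv 1 (by omega) (by omega)
    exact pqNum_ne_zero hp hq hpq (by simpa using h)
  have hNtop : pqNum p q (v + (((n+κ:ℕ):ℝ) + 1)) ≠ 0 := by
    have h := hv (n+κ+1) (by omega) (by omega)
    apply pqNum_ne_zero hp hq hpq
    rw [show v + (((n+κ:ℕ):ℝ) + 1) = v + ((n+κ+1:ℕ):ℝ) by push_cast; ring]
    exact h
  have hNtop' : pqNum p q (v + ((n:ℝ) + (κ:ℝ) + 1)) ≠ 0 := by
    rw [show v + ((n:ℝ) + (κ:ℝ) + 1) = v + (((n+κ:ℕ):ℝ) + 1) by push_cast; ring]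
    exact hNtop
  have hadd' : pqNum p q (v + ((n:ℝ) + (κ:ℝ) + 1))
      = p ^ (v+1) * pqNum p q ((n:ℝ)+(κ:ℝ)) + q ^ ((n:ℝ)+(κ:ℝ)) * pqNum p q (v+1) := by
    have h := pqNum_add hp hq ((n:ℝ)+(κ:ℝ)) (v+1)
    rw [show (n:ℝ)+(κ:ℝ)+(v+1) = v + ((n:ℝ) + (κ:ℝ) + 1) by ring] at h
    exact h
  have hD : (∏ i ∈ Finset.range (n+κ), pqNum p q (v + ((i:ℝ)+1))) ≠ 0 := by
    apply Finset.prod_ne_zero_iff.mpr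
    intro i hi
    apply pqNum_ne_zero hp hq hpq
    have h := hv (i+1) (by omega) (by have := Finset.mem_range.mp hi; omega)
    rw [show v + ((i:ℝ)+1) = v + ((i+1:ℕ):ℝ) by push_cast; ring]
    exact h
  have hD'eq : (∏ i ∈ Finset.range (n+κ), pqNum p q (v + 1 + ((i:ℝ)+1)))
      = (∏ i ∈ Finset.range (n+κ), pqNum p q (v + ((i:ℝ)+1)))
        * pqNum p q (v + (((n+κ:ℕ):ℝ) + 1)) / pqNum p q (v + 1) := by
    rw [eq_div_iff hN1, ← Finset.prod_range_succ (fun i => pqNum p q (v + ((i:ℝ)+1))) (n+κ),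
      Finset.prod_range_succ']
    congr 1
    · exact Finset.prod_congr rfl fun i _ => by congr 1; push_cast; ring
    · congr 1; push_cast; ring
  have hadd : pqNum p q (v + (((n+κ:ℕ):ℝ) + 1))
      = p ^ (v+1) * pqNum p q ((n:ℝ)+(κ:ℝ)) + q ^ ((n:ℝ)+(κ:ℝ)) * pqNum p q (v+1) := by
    have h := pqNum_add hp hq ((n:ℝ)+(κ:ℝ)) (v+1)
    rw [show (n:ℝ)+(κ:ℝ)+(v+1) = v + (((n+κ:ℕ):ℝ) + 1) by push_cast; ring] at h
    exact h
  have eq3 : q ^ (-(((n:ℝ)+(κ:ℝ))*((u:ℝ)+1-(κ:ℝ)))) * q ^ ((n:ℝ)+(κ:ℝ))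
      = q ^ (-(((n:ℝ)+(κ:ℝ))*((u:ℝ)-(κ:ℝ)))) := by
    rw [← Real.rpow_add hq]; congr 1; ring
  have e2 : p ^ ((κ:ℝ)*(v+1+(n:ℝ)+(κ:ℝ))) * p ^ (v+1)
      = p ^ ((κ:ℝ)*(v+1+(n:ℝ)+(κ:ℝ)) + (v+1)) := (Real.rpow_add hp _ _).symm
  rw [vTerm, vA, vB, hD'eq, Finset.prod_range_succ, div_div_eq_mul_div,
    ← mul_div_mul_right
      (pqBinomR p q (-(n:ℝ)) κ * p ^ ((κ:ℝ)*(v+1+(n:ℝ)+(κ:ℝ)))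
        * q ^ (-(((n:ℝ)+(κ:ℝ))*((u:ℝ)+1-(κ:ℝ)))) * pqFacOrd p q (u:ℝ) κ)
      (∏ i ∈ Finset.range (n+κ), pqNum p q (v + ((i:ℝ)+1))) hNtop,
    ← neg_div, ← add_div]
  congr 1
  linear_combination
    (-(pqBinomR p q (-(n:ℝ)) κ * p ^ ((κ:ℝ)*(v+1+(n:ℝ)+(κ:ℝ))) * q ^ (-(((n:ℝ)+(κ:ℝ))*((u:ℝ)+1-(κ:ℝ))))
       * pqFacOrd p q (u:ℝ) κ)) * hadd
    + (-(pqBinomR p q (-(n:ℝ)) κ * q ^ (-(((n:ℝ)+(κ:ℝ))*((u:ℝ)+1-(κ:ℝ)))) * pqNum p q ((n:ℝ)+(κ:ℝ))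
       * pqFacOrd p q (u:ℝ) κ)) * e2
    + (-(pqBinomR p q (-(n:ℝ)) κ * p ^ ((κ:ℝ)*(v+1+(n:ℝ)+(κ:ℝ))) * pqNum p q (v+1)
       * pqFacOrd p q (u:ℝ) κ)) * eq3

lemma tsucc (hp : 0 < p) (hq : 0 < q) (hpq : p ≠ q) (n u : ℕ) (v : ℝ) (κ : ℕ) :
    vTerm p q n ((u : ℝ) + 1) v (κ + 1) = vA p q n u v (κ + 1) + vB p q n u v κ := by
  have hNk1 : pqNum p q ((κ : ℝ) + 1) ≠ 0 := pqNum_ne_zero hp hq hpq (by positivity)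
  rw [vTerm, vA, vB, show n + (κ + 1) = n + κ + 1 from rfl, ← neg_div, ← add_div]
  congr 1
  push_cast
  rw [pqBinomR_succ, pqFacOrd_succ', pqFacOrd_succ,
    show (u : ℝ) + 1 - 1 = (u : ℝ) by ring,
    show -(n : ℝ) - (κ : ℝ) = -((n : ℝ) + (κ : ℝ)) by ring,
    pqNum_neg hp hq ((n : ℝ) + (κ : ℝ))]
  have hcore : pqNum p q ((u : ℝ) + 1)
      = p ^ ((κ : ℝ) + 1) * pqNum p q ((u : ℝ) - (κ : ℝ))
        + q ^ ((u : ℝ) - (κ : ℝ)) * pqNum p q ((κ : ℝ) + 1) := by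
    have h := pqNum_add hp hq ((u : ℝ) - (κ : ℝ)) ((κ : ℝ) + 1)
    rw [show (u : ℝ) - (κ : ℝ) + ((κ : ℝ) + 1) = (u : ℝ) + 1 by ring] at h
    exact h
  rw [hcore]
  have e1 : p ^ (((κ:ℝ)+1)*(v+(n:ℝ)+((κ:ℝ)+1))) * p ^ ((κ:ℝ)+1)
      = p ^ (((κ:ℝ)+1)*(v+1+(n:ℝ)+((κ:ℝ)+1))) := by
    rw [← Real.rpow_add hp]; congr 1; ring
  have e2 : p ^ (-(κ:ℝ) + -(n:ℝ)) * p ^ (((κ:ℝ)+1)*(v+(n:ℝ)+((κ:ℝ)+1)))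
      = p ^ ((κ:ℝ)*(v+1+(n:ℝ)+(κ:ℝ)) + (v+1)) := by
    rw [← Real.rpow_add hp]; congr 1; ring
  have e3 : q ^ (-(κ:ℝ) + -(n:ℝ)) * q ^ (-(((n:ℝ)+((κ:ℝ)+1))*((u:ℝ)-(κ:ℝ)))) * q ^ ((u:ℝ)-(κ:ℝ))
      = q ^ (-(((n:ℝ)+(κ:ℝ))*((u:ℝ)+1-(κ:ℝ)))) := by
    rw [← Real.rpow_add hq, ← Real.rpow_add hq]; congr 1; ring
  linear_combination (norm := ring_nf)
    (-(pqBinomR p q (-(n:ℝ)) κ * p ^ (-((n:ℝ)+(κ:ℝ))) * q ^ (-((n:ℝ)+(κ:ℝ))) * pqNum p q ((n:ℝ)+(κ:ℝ))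
        * q ^ (-(((n:ℝ)+((κ:ℝ)+1))*((u:ℝ)-(κ:ℝ)))) * pqFacOrd p q (u:ℝ) κ * pqNum p q ((u:ℝ)-(κ:ℝ))
        / pqNum p q ((κ:ℝ)+1))) * e1
      + (-(pqBinomR p q (-(n:ℝ)) κ * pqNum p q ((n:ℝ)+(κ:ℝ)) * pqFacOrd p q (u:ℝ) κ
          * q ^ (-(((n:ℝ)+(κ:ℝ))*((u:ℝ)+1-(κ:ℝ)))))) * e2
      + (-(pqBinomR p q (-(n:ℝ)) κ * pqNum p q ((n:ℝ)+(κ:ℝ)) * pqFacOrd p q (u:ℝ) κ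
          * p ^ (-((n:ℝ)+(κ:ℝ))) * p ^ (((κ:ℝ)+1)*(v+(n:ℝ)+((κ:ℝ)+1))))) * e3
      + (-(pqBinomR p q (-(n:ℝ)) κ * p ^ (-((n:ℝ)+(κ:ℝ))) * q ^ (-((n:ℝ)+(κ:ℝ))) * pqNum p q ((n:ℝ)+(κ:ℝ))
          * p ^ (((κ:ℝ)+1)*(v+(n:ℝ)+((κ:ℝ)+1))) * q ^ (-(((n:ℝ)+((κ:ℝ)+1))*((u:ℝ)-(κ:ℝ))))
          * q ^ ((u:ℝ)-(κ:ℝ)) * pqFacOrd p q (u:ℝ) κ)) * mul_inv_cancel₀ hNk1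

lemma stepSum (hp : 0 < p) (hq : 0 < q) (hpq : p ≠ q) (n u : ℕ) (v : ℝ)
    (hv : ∀ i : ℕ, 1 ≤ i → i ≤ n + u + 1 → v + (i : ℝ) ≠ 0) :
    ∑ κ ∈ Finset.range (u+1), vTerm p q n (u : ℝ) (v+1) κ
      = ∑ κ ∈ Finset.range (u+1+1), vTerm p q n ((u : ℝ)+1) v κ := by
  have h1 : ∀ κ ∈ Finset.range (u+1), vTerm p q n (u : ℝ) (v+1) κ = vA p q n u v κ + vB p q n u v κ :=
    fun κ hκ => split hp hq hpq n u v κ (Finset.mem_range_succ_iff.mp hκ) hv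
  calc ∑ κ ∈ Finset.range (u+1), vTerm p q n (u : ℝ) (v+1) κ
      = ∑ κ ∈ Finset.range (u+1), (vA p q n u v κ + vB p q n u v κ) := Finset.sum_congr rfl h1
    _ = (∑ κ ∈ Finset.range (u+1), vA p q n u v κ) + ∑ κ ∈ Finset.range (u+1), vB p q n u v κ :=
        Finset.sum_add_distrib
    _ = ((∑ κ ∈ Finset.range (u+1), vA p q n u v κ) + vA p q n u v (u+1))
          + ∑ κ ∈ Finset.range (u+1), vB p q n u v κ := by rw [vA_top hp hq]; ring
    _ = (∑ κ ∈ Finset.range (u+1+1), vA p q n u v κ) + ∑ κ ∈ Finset.range (u+1), vB p q n u v κ := by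
        rw [Finset.sum_range_succ _ (u+1)]
    _ = ((∑ κ ∈ Finset.range (u+1), vA p q n u v (κ+1)) + vA p q n u v 0)
          + ∑ κ ∈ Finset.range (u+1), vB p q n u v κ := by rw [Finset.sum_range_succ']
    _ = vTerm p q n ((u : ℝ)+1) v 0 + ∑ κ ∈ Finset.range (u+1), (vA p q n u v (κ+1) + vB p q n u v κ) := by
        rw [tzero, Finset.sum_add_distrib]; ring
    _ = vTerm p q n ((u : ℝ)+1) v 0 + ∑ κ ∈ Finset.range (u+1), vTerm p q n ((u : ℝ)+1) v (κ+1) := by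
        rw [Finset.sum_congr rfl fun κ _ => (tsucc hp hq hpq n u v κ).symm]
    _ = ∑ κ ∈ Finset.range (u+1+1), vTerm p q n ((u : ℝ)+1) v κ := by
        rw [Finset.sum_range_succ' (fun κ => vTerm p q n ((u : ℝ)+1) v κ) (u+1)]
        exact add_comm _ _

lemma vander_aux (hp : 0 < p) (hq : 0 < q) (hpq : p ≠ q) (n : ℕ) :
    ∀ (u : ℕ) (v : ℝ), (∀ i : ℕ, 1 ≤ i → i ≤ n + u → v + (i : ℝ) ≠ 0) →
    1 / (∏ i ∈ Finset.range n, pqNum p q ((u : ℝ) + v + ((i : ℝ)+1)))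
      = ∑ κ ∈ Finset.range (u+1), vTerm p q n (u : ℝ) v κ := by
  intro u
  induction u with
  | zero =>
    intro v hv
    rw [Finset.sum_range_one]
    simp only [vTerm, pqBinomR_zero, pqFacOrd, Finset.range_zero, Finset.prod_empty,
      Nat.cast_zero, Nat.add_zero]
    norm_num
  | succ u ih =>
    intro v hv
    have hv' : ∀ i : ℕ, 1 ≤ i → i ≤ n + u → (v+1) + (i : ℝ) ≠ 0 := by
      intro i h1 h2
      rw [show (v+1) + (i : ℝ) = v + ((i+1:ℕ) : ℝ) by push_cast; ring]
      exact hv (i+1) (by omega) (by omega)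
    have hstep := stepSum hp hq hpq n u v (by intro i h1 h2; exact hv i h1 (by omega))
    have hlhs : (∏ i ∈ Finset.range n, pqNum p q (((u+1:ℕ) : ℝ) + v + ((i : ℝ)+1)))
        = ∏ i ∈ Finset.range n, pqNum p q ((u : ℝ) + (v+1) + ((i : ℝ)+1)) :=
      Finset.prod_congr rfl fun i _ => by congr 1; push_cast; ring
    rw [show ((u+1:ℕ) : ℝ) = (u : ℝ)+1 by push_cast; ring] at hlhs ⊢
    rw [hlhs, ih (v+1) hv', hstep]

end


/-- The negative (p,q)-deformed Vandermonde formula. -/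
theorem pq_negative_vandermonde (p q : ℝ) (hp : 0 < p) (hq : 0 < q) (hpq : p ≠ q)
    (n : ℕ) (hn : 0 < n) (u : ℕ) (v : ℝ)
    (hv : ∀ i : ℕ, 1 ≤ i → i ≤ n + u → v + (i : ℝ) ≠ 0)
    (huv : ∀ i : ℕ, 1 ≤ i → i ≤ n → (u : ℝ) + v + (i : ℝ) ≠ 0) :
    1 / ∏ i ∈ Finset.range n, pqNum p q ((u : ℝ) + v + ((i : ℝ) + 1)) =
      ∑ κ ∈ Finset.range (u + 1),
        pqBinomR p q (-(n : ℝ)) κ * p ^ ((κ : ℝ) * (v + (n : ℝ) + (κ : ℝ)))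
          * q ^ (-(((n : ℝ) + (κ : ℝ)) * ((u : ℝ) - (κ : ℝ))))
          * pqFacOrd p q (u : ℝ) κ
          / ∏ i ∈ Finset.range (n + κ), pqNum p q (v + ((i : ℝ) + 1)) := by
  have h := vander_aux hp hq hpq n u v hv
  simpa only [vTerm] using h
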